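/- Let Q ∈ ℝ^{N×N}, κ > 0, and suppose (x*, y*) ∈ ℝ^N × ℝ^N satisfies the fixed-point equations Qᵀx* + κ(x*ᵀy*)x* − κ·diag(y*)·x* = 0 and Qᵀy* + κ(x*ᵀy*)y* − κ·diag(x*)·y* = 0. Then, setting z* = x* − y* and Λ* = κ·x*ᵀy*, one has Qᵀz* + Λ*z* = 0; in particular, when Q = −L for a graph Laplacian L, either z* = 0 or z* is an eigenvector of Lᵀ with eigenvalue Λ*. -/
import Mathlib


open Matrix

/-- at a fixed point of the interaction ODE, the difference
`z* = x* − y*` satisfies `Qᵀz* + Λ*z* = 0` with `Λ* = κ x*ᵀy*`; in particular, when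
`Q = -L`, either `z* = 0` or `z*` is an eigenvector of `Lᵀ` with eigenvalue `Λ*`. -/
theorem fixed_point_difference_eigenvector (N : ℕ)
    (Q : Matrix (Fin N) (Fin N) ℝ) (κ : ℝ) (hκ : 0 < κ) (x y : Fin N → ℝ)
    (hfx : Qᵀ.mulVec x + (κ * (x ⬝ᵥ y)) • x - κ • (Matrix.diagonal y).mulVec x = 0)
    (hfy : Qᵀ.mulVec y + (κ * (x ⬝ᵥ y)) • y - κ • (Matrix.diagonal x).mulVec y = 0) :
    Qᵀ.mulVec (x - y) + (κ * (x ⬝ᵥ y)) • (x - y) = 0 ∧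
    (∀ L : Matrix (Fin N) (Fin N) ℝ, Q = -L →
      (x - y = 0 ∨ (x - y ≠ 0 ∧ Lᵀ.mulVec (x - y) = (κ * (x ⬝ᵥ y)) • (x - y)))) := by
  have key : (Matrix.diagonal y).mulVec x = (Matrix.diagonal x).mulVec y := by
    ext i; simp [mulVec_diagonal, mul_comm]
  have main : Qᵀ.mulVec (x - y) + (κ * (x ⬝ᵥ y)) • (x - y) = 0 := by
    rw [mulVec_sub]
    rw [key] at hfx
    linear_combination (norm := module) hfx - hfy
  refine ⟨main, fun L hL => ?_⟩
  by_cases hz : x - y = 0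
  · exact Or.inl hz
  · refine Or.inr ⟨hz, ?_⟩
    subst hL
    rw [transpose_neg, neg_mulVec] at main
    linear_combination (norm := module) -main
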